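/- Let A = (Q_{2^{s_n}})^{i_n}(Q_{2^{s_{n−1}}})^{i_{n−1}}⋯(Q_{2^{s_1}})^{i_1} be an A-polynomial. With the conventions s_0 := −1, i_{n+1} := 2, and 0^0 := 1, set c_k = (i_k − 1)^{s_k − s_{k−1} − 1} for 1 ≤ k ≤ n and c = ∏_{k=1}^n c_k. Then ∫ A dμ = c · ∏_{k=1}^n ||Q_{2^{s_k}}||^{2(i_{k+1} − 1)}. -/

import Mathlib

open Polynomial MeasureTheory Filter

/-- `r γ s` : the recursively defined scales `r 0 = 1`, `r (s+1) = γ (s+1) * (r s)²`. -/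
noncomputable def r (γ : ℕ → ℝ) : ℕ → ℝ
  | 0 => 1
  | s + 1 => γ (s + 1) * (r γ s) ^ 2

/-- `P γ s` : the polynomial `P_{2^s}`, with `P_1 = X - 1` and
`P_{2^{s+1}} = P_{2^s} · (P_{2^s} + r_s)`. -/
noncomputable def P (γ : ℕ → ℝ) : ℕ → Polynomial ℝ
  | 0 => X - 1
  | s + 1 => P γ s * (P γ s + C (r γ s))

/-- The integral `∫ f dν_s` of a function `f` against the normalized counting measure `ν_s`
on the `2^s` (simple, real) zeros of `P_{2^s} + r_s/2`. -/
noncomputable def nuInt (γ : ℕ → ℝ) (s : ℕ) (f : ℝ → ℝ) : ℝ :=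
  (((P γ s + C (r γ s / 2)).roots.map f).sum) / 2 ^ s

namespace AG

noncomputable def RR (γ : ℕ → ℝ) (s : ℕ) : Polynomial ℝ := P γ s + C (r γ s / 2)

noncomputable def tau (γ : ℕ → ℝ) (s : ℕ) : ℝ := (r γ s)^2/4 - r γ (s+1)/2

lemma rpos (γ : ℕ → ℝ) (hγ : ∀ s : ℕ, 0 < γ (s + 1) ∧ γ (s + 1) < 1 / 4) (s : ℕ) :
    0 < r γ s := by
  induction s with
  | zero => norm_num [r]
  | succ n ih => exact mul_pos (hγ n).1 (pow_pos ih 2)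

lemma taupos (γ : ℕ → ℝ) (hγ : ∀ s : ℕ, 0 < γ (s + 1) ∧ γ (s + 1) < 1 / 4) (s : ℕ) :
    0 < tau γ s := by
  have h1 := rpos γ hγ s
  have h2 := (hγ s).2
  have h3 := (hγ s).1
  simp only [tau, r]
  nlinarith [pow_pos h1 2]

lemma ybound (γ : ℕ → ℝ) (hγ : ∀ s : ℕ, 0 < γ (s + 1) ∧ γ (s + 1) < 1 / 4) (s : ℕ) (y : ℝ)
    (hy : |y| ≤ r γ (s+1)/2) : 0 < y + tau γ s ∧ y + tau γ s ≤ (r γ s/2)^2 := by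
  have h1 := rpos γ hγ s
  have h2 := (hγ s).2
  have h3 := (hγ s).1
  have hy1 := abs_le.mp hy
  simp only [tau, r] at *
  constructor <;> nlinarith [pow_pos h1 2]

lemma Pfacts (γ : ℕ → ℝ) (s : ℕ) : (P γ s).Monic ∧ (P γ s).natDegree = 2^s := by
  induction s with
  | zero =>
    constructor
    · show (X - 1 : Polynomial ℝ).Monic
      rw [show (1 : Polynomial ℝ) = C 1 from C_1.symm]
      exact monic_X_sub_C 1
    · show (X - 1 : Polynomial ℝ).natDegree = 1
      rw [show (1 : Polynomial ℝ) = C 1 from C_1.symm, natDegree_X_sub_C]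
  | succ n ih =>
    obtain ⟨hm, hd⟩ := ih
    have hdpos : 0 < (P γ n).natDegree := by rw [hd]; positivity
    have hm2 : (P γ n + C (r γ n)).Monic :=
      hm.add_of_left (lt_of_le_of_lt degree_C_le (natDegree_pos_iff_degree_pos.mp hdpos))
    constructor
    · exact hm.mul hm2
    · show (P γ n * (P γ n + C (r γ n))).natDegree = 2^(n+1)
      rw [hm.natDegree_mul hm2, natDegree_add_C, hd, pow_succ]
      omega

lemma RRmonic (γ : ℕ → ℝ) (s : ℕ) : (RR γ s).Monic := by
  have hdpos : 0 < (P γ s).natDegree := by rw [(Pfacts γ s).2]; positivity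
  exact (Pfacts γ s).1.add_of_left
    (lt_of_le_of_lt degree_C_le (natDegree_pos_iff_degree_pos.mp hdpos))

lemma RRdeg (γ : ℕ → ℝ) (s : ℕ) : (RR γ s).natDegree = 2^s := by
  have hdpos : 0 < (P γ s).natDegree := by rw [(Pfacts γ s).2]; positivity
  rw [RR, natDegree_add_C, (Pfacts γ s).2]

lemma RCmonic (γ : ℕ → ℝ) (s : ℕ) (c : ℝ) : (RR γ s - C c).Monic := by
  have hdpos : 0 < (RR γ s).natDegree := by rw [RRdeg]; positivity
  rw [sub_eq_add_neg, ← C_neg]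
  exact (RRmonic γ s).add_of_left
    (lt_of_le_of_lt degree_C_le (natDegree_pos_iff_degree_pos.mp hdpos))

lemma RCne (γ : ℕ → ℝ) (s : ℕ) (c : ℝ) : RR γ s - C c ≠ 0 := (RCmonic γ s c).ne_zero

lemma Rrec (γ : ℕ → ℝ) (s : ℕ) : RR γ (s+1) = (RR γ s)^2 - C (tau γ s) := by
  have e1 : C (r γ s) = C (r γ s/2) + C (r γ s/2) := by rw [← C_add]; ring_nf
  have e2 : C (tau γ s) = C (r γ s/2) * C (r γ s/2) - C (r γ (s+1)/2) := by
    rw [← C_mul, ← C_sub]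
    congr 1
    simp only [tau]
    ring
  show P γ (s+1) + C (r γ (s+1) / 2) = _
  rw [e2]
  show P γ s * (P γ s + C (r γ s)) + C (r γ (s+1)/2) = _
  rw [e1, RR]
  ring

lemma decomp (γ : ℕ → ℝ) (hγ : ∀ s : ℕ, 0 < γ (s + 1) ∧ γ (s + 1) < 1 / 4) (s : ℕ) (y : ℝ)
    (hy : |y| ≤ r γ (s+1)/2) :
    ∃ a : ℝ, 0 < a ∧ a ≤ r γ s/2 ∧ a^2 = y + tau γ s ∧
      (RR γ (s+1) - C y).roots = (RR γ s - C a).roots + (RR γ s - C (-a)).roots := by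
  obtain ⟨h1, h2⟩ := ybound γ hγ s y hy
  set a := Real.sqrt (y + tau γ s) with ha
  have ha2 : a^2 = y + tau γ s := Real.sq_sqrt h1.le
  have hapos : 0 < a := Real.sqrt_pos.mpr h1
  have hale : a ≤ r γ s/2 := by
    have := Real.sqrt_le_sqrt h2
    rwa [Real.sqrt_sq (by linarith [rpos γ hγ s] : (0:ℝ) ≤ r γ s/2)] at this
  refine ⟨a, hapos, hale, ha2, ?_⟩
  have hC : C a * C a = C y + C (tau γ s) := by
    rw [← C_mul, ← C_add]
    congr 1
    nlinarith [ha2]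
  have hfac : RR γ (s+1) - C y = (RR γ s - C a) * (RR γ s - C (-a)) := by
    rw [Rrec]
    simp only [map_neg]
    linear_combination hC
  rw [hfac, roots_mul (mul_ne_zero (RCne γ s a) (RCne γ s (-a)))]

lemma R0eq (γ : ℕ → ℝ) (y : ℝ) : RR γ 0 - C y = X - C (y + 1/2) := by
  have h2 : C (1/2 : ℝ) + C (1/2 : ℝ) = 1 := by rw [← C_add]; norm_num
  show P γ 0 + C (r γ 0 / 2) - C y = _
  show X - 1 + C (r γ 0 / 2) - C y = _
  rw [show r γ 0 = 1 from rfl, C_add]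
  linear_combination h2

lemma Lcard (γ : ℕ → ℝ) (hγ : ∀ s : ℕ, 0 < γ (s + 1) ∧ γ (s + 1) < 1 / 4) :
    ∀ s y, |y| ≤ r γ s/2 → ((RR γ s - C y).roots.card = 2^s) := by
  intro s
  induction s with
  | zero => intro y hy; rw [R0eq, roots_X_sub_C]; simp
  | succ n ih =>
    intro y hy
    obtain ⟨a, hapos, hale, ha2, hroots⟩ := decomp γ hγ n y hy
    rw [hroots, Multiset.card_add, ih a (by rw [abs_of_pos hapos]; exact hale),
        ih (-a) (by rw [abs_neg, abs_of_pos hapos]; exact hale), pow_succ]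
    ring

lemma rootval (γ : ℕ → ℝ) (s : ℕ) (z : ℝ) {x : ℝ} (hx : x ∈ (RR γ s - C z).roots) :
    (RR γ s).eval x = z := by
  have := isRoot_of_mem_roots hx
  simp only [IsRoot, eval_sub, eval_C] at this
  linarith


lemma map_mul_sum (γ : ℕ → ℝ) (s : ℕ) (z : ℝ) (f : ℝ → ℝ) (i : ℕ) :
    (((RR γ s - C z).roots).map (fun x => (RR γ s).eval x ^ i * f x)).sum
      = z ^ i * (((RR γ s - C z).roots).map f).sum := by
  rw [Multiset.map_congr rfl (fun x hx => by rw [rootval γ s z hx]),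
    ← Multiset.sum_map_mul_left]

lemma map_const_sum (γ : ℕ → ℝ) (s : ℕ) (z : ℝ) (i : ℕ) :
    (((RR γ s - C z).roots).map (fun x => (RR γ s).eval x ^ i)).sum
      = ((RR γ s - C z).roots.card : ℝ) * z ^ i := by
  rw [Multiset.map_congr rfl (fun x hx => by rw [rootval γ s z hx])]
  simp [Multiset.map_const']

def Below : ℕ → List (ℕ × ℕ) → Prop
  | _, [] => True
  | u, (v, j) :: tl => v < u ∧ (j = 1 ∨ j = 2) ∧ Below v tl

noncomputable def Apoly (γ : ℕ → ℝ) : List (ℕ × ℕ) → Polynomial ℝ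
  | [] => 1
  | (u, i) :: tl => RR γ u ^ i * Apoly γ tl

noncomputable def Psi (γ : ℕ → ℝ) : List (ℕ × ℕ) → ℝ
  | [] => 1
  | [(_, i)] => (i : ℝ) - 1
  | (u, i) :: (v, j) :: tl =>
      (if i = 1 then (if u = v + 1 then 1 else 0) else tau γ v) * Psi γ ((v, j) :: tl)

lemma climb (γ : ℕ → ℝ) (hγ : ∀ s : ℕ, 0 < γ (s + 1) ∧ γ (s + 1) < 1 / 4)
    (h : Polynomial ℝ) (v : ℕ) (c d : ℝ)
    (H : ∀ z, |z| ≤ r γ v/2 → ((RR γ v - C z).roots.map (fun x => h.eval x)).sum = c + d * z) :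
    ∀ t, v < t → ∀ y, |y| ≤ r γ t/2 →
      ((RR γ t - C y).roots.map (fun x => h.eval x)).sum = 2^(t-v) * c := by
  intro t
  induction t with
  | zero => intro hvt; exact absurd hvt (by omega)
  | succ t iht =>
    intro hvt y hy
    obtain ⟨a, hapos, hale, ha2, hroots⟩ := decomp γ hγ t y hy
    have hb1 : |a| ≤ r γ t/2 := by rw [abs_of_pos hapos]; exact hale
    have hb2 : |-a| ≤ r γ t/2 := by rw [abs_neg]; exact hb1
    rw [hroots, Multiset.map_add, Multiset.sum_add]
    rcases eq_or_lt_of_le (Nat.lt_succ_iff.mp hvt) with rfl | hlt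
    · rw [H a hb1, H (-a) hb2, show v + 1 - v = 1 from by omega]
      ring
    · rw [iht hlt a hb1, iht hlt (-a) hb2, show t + 1 - v = (t - v) + 1 from by omega, pow_succ]
      ring

lemma ind (γ : ℕ → ℝ) (hγ : ∀ s : ℕ, 0 < γ (s + 1) ∧ γ (s + 1) < 1 / 4) :
    ∀ (tl : List (ℕ × ℕ)) (u i : ℕ), (i = 1 ∨ i = 2) → Below u tl →
    ∀ y, |y| ≤ r γ (u+1)/2 →
    ((RR γ (u+1) - C y).roots.map (fun x => (Apoly γ ((u,i)::tl)).eval x)).sum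
      = 2^(u+1) * Psi γ ((u,i)::tl) * (tau γ u + y) := by
  intro tl
  induction tl with
  | nil =>
    intro u i hi _ y hy
    obtain ⟨a, hapos, hale, ha2, hroots⟩ := decomp γ hγ u y hy
    have hb1 : |a| ≤ r γ u/2 := by rw [abs_of_pos hapos]; exact hale
    have hb2 : |-a| ≤ r γ u/2 := by rw [abs_neg]; exact hb1
    have c1 := Lcard γ hγ u a hb1
    have c2 := Lcard γ hγ u (-a) hb2
    rw [hroots, Multiset.map_add, Multiset.sum_add]
    simp only [Apoly, eval_mul, eval_pow, eval_one, mul_one]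
    rw [map_const_sum, map_const_sum, c1, c2]
    rcases hi with rfl | rfl
    · simp only [Psi]
      push_cast
      ring
    · simp only [Psi]
      push_cast
      linear_combination (2:ℝ)^(u+1) * ha2
  | cons hd tl' IH =>
    obtain ⟨v, j⟩ := hd
    intro u i hi hb y hy
    obtain ⟨hvu, hj, hbv⟩ := hb
    have hIH := IH v j hj hbv
    set Ψ := Psi γ ((v,j)::tl') with hΨ
    have hG : ∀ z, |z| ≤ r γ u/2 →
        ((RR γ u - C z).roots.map (fun x => (Apoly γ ((v,j)::tl')).eval x)).sum
          = 2^u * (tau γ v * Ψ + (if u = v+1 then 1 else 0) * Ψ * z) := by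
      intro z hz
      by_cases hchain : u = v + 1
      · subst hchain
        rw [hIH z hz, if_pos rfl]
        ring
      · have hlt : v + 1 < u := by omega
        have hcl := climb γ hγ (Apoly γ ((v,j)::tl')) (v+1) (2^(v+1) * Ψ * tau γ v)
          (2^(v+1) * Ψ) (fun z hz => by rw [hIH z hz]; ring) u hlt z hz
        rw [hcl, if_neg hchain]
        have h2 : (2:ℝ)^(u-(v+1)) * 2^(v+1) = 2^u := by
          rw [← pow_add]
          congr 1
          omega
        linear_combination (Ψ * tau γ v) * h2
    obtain ⟨a, hapos, hale, ha2, hroots⟩ := decomp γ hγ u y hy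
    have hb1 : |a| ≤ r γ u/2 := by rw [abs_of_pos hapos]; exact hale
    have hb2 : |-a| ≤ r γ u/2 := by rw [abs_neg]; exact hb1
    rw [hroots, Multiset.map_add, Multiset.sum_add,
      show Apoly γ ((u,i)::(v,j)::tl') = RR γ u ^ i * Apoly γ ((v,j)::tl') from rfl]
    simp only [eval_mul, eval_pow]
    rw [map_mul_sum γ u a _ i, map_mul_sum γ u (-a) _ i, hG a hb1, hG (-a) hb2]
    rcases hi with rfl | rfl
    · simp only [Psi, reduceIte, ← hΨ]
      linear_combination ((2:ℝ)^(u+1) * (if u = v + 1 then (1:ℝ) else 0) * Ψ) * ha2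
    · simp only [Psi, ← hΨ]
      rw [if_neg (by norm_num : ¬(2 = 1))]
      linear_combination ((2:ℝ)^(u+1) * tau γ v * Ψ) * ha2

lemma integ (γ : ℕ → ℝ) (hγ : ∀ s : ℕ, 0 < γ (s + 1) ∧ γ (s + 1) < 1 / 4)
    (μ : Measure ℝ)
    (hμconv : ∀ p : Polynomial ℝ,
      Tendsto (fun s => nuInt γ s (fun x => p.eval x)) atTop (nhds (∫ x, p.eval x ∂μ)))
    (u i : ℕ) (tl : List (ℕ × ℕ)) (hi : i = 1 ∨ i = 2) (hb : Below u tl) :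
    ∫ x, (Apoly γ ((u,i)::tl)).eval x ∂μ = tau γ u * Psi γ ((u,i)::tl) := by
  set p := Apoly γ ((u,i)::tl) with hp
  set Ψ := Psi γ ((u,i)::tl) with hΨ
  have hcl := climb γ hγ p (u+1) (2^(u+1) * Ψ * tau γ u) (2^(u+1) * Ψ)
    (fun z hz => by rw [hp, hΨ, ind γ hγ tl u i hi hb z hz]; ring)
  have hev : ∀ᶠ t in atTop, nuInt γ t (fun x => p.eval x) = tau γ u * Ψ := by
    rw [eventually_atTop]
    refine ⟨u+2, fun t ht => ?_⟩
    have h0 : |(0:ℝ)| ≤ r γ t/2 := by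
      rw [abs_zero]; linarith [rpos γ hγ t]
    have hval := hcl t (by omega) 0 h0
    have hR : P γ t + C (r γ t/2) = RR γ t - C 0 := by simp [RR]
    rw [nuInt, hR, hval, div_eq_iff (by positivity : ((2:ℝ)^t) ≠ 0)]
    have h2 : (2:ℝ)^(t-(u+1)) * 2^(u+1) = 2^t := by
      rw [← pow_add]; congr 1; omega
    linear_combination (Ψ * tau γ u) * h2
  have hev' : (fun t => nuInt γ t (fun x => p.eval x)) =ᶠ[atTop] (fun _ => tau γ u * Ψ) := hev
  exact tendsto_nhds_unique (hμconv p) (Tendsto.congr' hev'.symm tendsto_const_nhds)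

noncomputable def bin : ℕ → List (ℕ × ℕ)
  | 0 => []
  | (d+1) =>
    have h1 : 2^(d+1).log2 ≤ d+1 := Nat.log2_self_le (by omega)
    have h2 : 0 < 2^(d+1).log2 := Nat.pow_pos (by omega)
    have : d + 1 - 2^(d+1).log2 < d + 1 := by omega
    ((d+1).log2, 1) :: bin (d + 1 - 2^(d+1).log2)
  termination_by d => d

lemma bin_zero : bin 0 = [] := by rw [bin]
lemma bin_succ (e : ℕ) : bin (e+1) = ((e+1).log2, 1) :: bin (e + 1 - 2^(e+1).log2) := by
  rw [bin]

lemma binOnes : ∀ d : ℕ, ∀ q ∈ bin d, q.2 = 1 := by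
  intro d
  induction d using Nat.strong_induction_on with
  | _ d IH =>
    match d with
    | 0 => intro q hq; simp [bin_zero] at hq
    | (e+1) =>
      intro q hq
      rw [bin_succ] at hq
      rcases List.mem_cons.mp hq with h | h
      · rw [h]
      · have h1 : 2^(e+1).log2 ≤ e+1 := Nat.log2_self_le (by omega)
        have h2 : 0 < 2^(e+1).log2 := Nat.pow_pos (by omega)
        exact IH (e + 1 - 2^(e+1).log2) (by omega) q h

lemma binBelow : ∀ d s : ℕ, d < 2^s → Below s (bin d) := by
  intro d
  induction d using Nat.strong_induction_on with
  | _ d IH =>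
    match d with
    | 0 => intro s _; rw [bin_zero]; trivial
    | (e+1) =>
      intro s hs
      rw [bin_succ]
      have h1 : 2^(e+1).log2 ≤ e+1 := Nat.log2_self_le (by omega)
      have h2 : 0 < 2^(e+1).log2 := Nat.pow_pos (by omega)
      have h3 : e+1 < 2^((e+1).log2 + 1) := Nat.lt_log2_self
      have h4 : 2^((e+1).log2 + 1) = 2 * 2^(e+1).log2 := by rw [pow_succ]; ring
      refine ⟨?_, Or.inl rfl, ?_⟩
      · exact (Nat.log2_lt (by omega)).mpr hs
      · exact IH (e + 1 - 2^(e+1).log2) (by omega) _ (by omega)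

lemma binMonicDeg (γ : ℕ → ℝ) : ∀ d : ℕ,
    (Apoly γ (bin d)).Monic ∧ (Apoly γ (bin d)).natDegree = d := by
  intro d
  induction d using Nat.strong_induction_on with
  | _ d IH =>
    match d with
    | 0 => constructor <;> simp [bin_zero, Apoly]
    | (e+1) =>
      have h1 : 2^(e+1).log2 ≤ e+1 := Nat.log2_self_le (by omega)
      have h2 : 0 < 2^(e+1).log2 := Nat.pow_pos (by omega)
      obtain ⟨ihm, ihd⟩ := IH (e + 1 - 2^(e+1).log2) (by omega)
      have hm : (RR γ (e+1).log2 ^ 1).Monic := by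
        simpa using RRmonic γ (e+1).log2
      constructor
      · rw [bin_succ, show Apoly γ (((e+1).log2, 1) :: bin (e + 1 - 2^(e+1).log2))
            = RR γ (e+1).log2 ^ 1 * Apoly γ (bin (e + 1 - 2^(e+1).log2)) from rfl]
        exact hm.mul ihm
      · rw [bin_succ, show Apoly γ (((e+1).log2, 1) :: bin (e + 1 - 2^(e+1).log2))
            = RR γ (e+1).log2 ^ 1 * Apoly γ (bin (e + 1 - 2^(e+1).log2)) from rfl,
          hm.natDegree_mul ihm, ihd, pow_one, RRdeg]
        omega

lemma PsiOnes (γ : ℕ → ℝ) : ∀ (tl : List (ℕ × ℕ)) (u : ℕ),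
    (∀ q ∈ tl, q.2 = 1) → Psi γ ((u, 1) :: tl) = 0 := by
  intro tl
  induction tl with
  | nil => intro u _; simp [Psi]
  | cons hd tl' IH =>
    intro u hall
    obtain ⟨v, j⟩ := hd
    have hj : j = 1 := hall (v, j) (by simp)
    subst hj
    show (if 1 = 1 then (if u = v + 1 then (1:ℝ) else 0) else tau γ v) * Psi γ ((v, 1) :: tl') = 0
    rw [IH v (fun q hq => hall q (by simp [hq]))]
    ring

lemma orthB (γ : ℕ → ℝ) (hγ : ∀ s : ℕ, 0 < γ (s + 1) ∧ γ (s + 1) < 1 / 4)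
    (μ : Measure ℝ)
    (hμconv : ∀ p : Polynomial ℝ,
      Tendsto (fun s => nuInt γ s (fun x => p.eval x)) atTop (nhds (∫ x, p.eval x ∂μ)))
    (s d : ℕ) (hd : d < 2^s) :
    ∫ x, (Apoly γ ((s,1) :: bin d)).eval x ∂μ = 0 := by
  rw [integ γ hγ μ hμconv s 1 (bin d) (Or.inl rfl) (binBelow d s hd),
    PsiOnes γ (bin d) s (binOnes d)]
  ring

lemma orthAux (γ : ℕ → ℝ) (hγ : ∀ s : ℕ, 0 < γ (s + 1) ∧ γ (s + 1) < 1 / 4)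
    (μ : Measure ℝ)
    (hμint : ∀ p : Polynomial ℝ, Integrable (fun x => p.eval x) μ)
    (hμconv : ∀ p : Polynomial ℝ,
      Tendsto (fun s => nuInt γ s (fun x => p.eval x)) atTop (nhds (∫ x, p.eval x ∂μ)))
    (s : ℕ) :
    ∀ N : ℕ, ∀ p : Polynomial ℝ, p.natDegree ≤ N → p.degree < ((2^s : ℕ) : WithBot ℕ) →
      ∫ x, (RR γ s).eval x * p.eval x ∂μ = 0 := by
  intro N
  induction N using Nat.strong_induction_on with
  | _ N IH =>
    intro p hpN hpdeg
    by_cases hp0 : p = 0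
    · simp [hp0]
    have hdlt : p.natDegree < 2^s := (natDegree_lt_iff_degree_lt hp0).mpr hpdeg
    set d := p.natDegree with hd
    obtain ⟨hBm, hBd⟩ := binMonicDeg γ d
    set B := Apoly γ (bin d) with hB
    set q := p - C p.leadingCoeff * B with hq
    have hlc : p.leadingCoeff ≠ 0 := leadingCoeff_ne_zero.mpr hp0
    have hCBne : C p.leadingCoeff * B ≠ 0 := mul_ne_zero (by simpa using hlc) hBm.ne_zero
    have hdegeq : p.degree = (C p.leadingCoeff * B).degree := by
      rw [degree_eq_natDegree hp0, degree_eq_natDegree hCBne, natDegree_C_mul hlc, hBd]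
    have hqd : q.degree < p.degree := by
      apply degree_sub_lt hdegeq hp0
      rw [leadingCoeff_mul, leadingCoeff_C, hBm.leadingCoeff, mul_one]
    have hsplit : (fun x : ℝ => (RR γ s).eval x * p.eval x)
        = fun x => (RR γ s).eval x * q.eval x
            + p.leadingCoeff * (Apoly γ ((s,1) :: bin d)).eval x := by
      funext x
      rw [show Apoly γ ((s,1) :: bin d) = RR γ s ^ 1 * B from rfl]
      simp only [hq, eval_sub, eval_mul, eval_pow, eval_C, pow_one]
      ring
    rw [hsplit, integral_add ?_ ?_]
    · have h2 : ∫ x, p.leadingCoeff * (Apoly γ ((s,1) :: bin d)).eval x ∂μ = 0 := by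
        rw [integral_const_mul, orthB γ hγ μ hμconv s d hdlt, mul_zero]
      rw [h2, add_zero]
      by_cases hq0 : q = 0
      · simp [hq0]
      · have hqdn : q.natDegree < p.natDegree := natDegree_lt_natDegree hq0 hqd
        exact IH q.natDegree (by omega) q le_rfl (lt_trans hqd hpdeg)
    · simpa only [eval_mul] using hμint (RR γ s * q)
    · exact (hμint (Apoly γ ((s,1) :: bin d))).const_mul _

lemma Qid (γ : ℕ → ℝ) (hγ : ∀ s : ℕ, 0 < γ (s + 1) ∧ γ (s + 1) < 1 / 4)
    (μ : Measure ℝ)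
    (hμint : ∀ p : Polynomial ℝ, Integrable (fun x => p.eval x) μ)
    (hμpos : ∀ p : Polynomial ℝ, p ≠ 0 → 0 < ∫ x, (p.eval x) ^ 2 ∂μ)
    (hμconv : ∀ p : Polynomial ℝ,
      Tendsto (fun s => nuInt γ s (fun x => p.eval x)) atTop (nhds (∫ x, p.eval x ∂μ)))
    (Q : ℕ → Polynomial ℝ) (hQmonic : ∀ n, (Q n).Monic) (hQdeg : ∀ n, (Q n).natDegree = n)
    (hQorth : ∀ n : ℕ, ∀ p : Polynomial ℝ, p.degree < (n : WithBot ℕ) →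
      ∫ x, (Q n).eval x * p.eval x ∂μ = 0)
    (s : ℕ) : Q (2^s) = RR γ s := by
  set h := Q (2^s) - RR γ s with hh
  have hQne : Q (2^s) ≠ 0 := (hQmonic (2^s)).ne_zero
  have hdeg : h.degree < ((2^s : ℕ) : WithBot ℕ) := by
    rcases eq_or_ne h 0 with h0 | h0
    · rw [h0, degree_zero]
      exact WithBot.bot_lt_coe _
    · have e1 : (Q (2^s)).degree = (RR γ s).degree := by
        rw [degree_eq_natDegree hQne, degree_eq_natDegree (RRmonic γ s).ne_zero, hQdeg, RRdeg]
      have e2 := degree_sub_lt e1 hQne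
        (by rw [(hQmonic (2^s)).leadingCoeff, (RRmonic γ s).leadingCoeff])
      calc h.degree < (Q (2^s)).degree := e2
        _ = _ := by rw [degree_eq_natDegree hQne, hQdeg]
  have hI1 : ∫ x, (Q (2^s)).eval x * h.eval x ∂μ = 0 := hQorth (2^s) h (by exact_mod_cast hdeg)
  have hI2 : ∫ x, (RR γ s).eval x * h.eval x ∂μ = 0 :=
    orthAux γ hγ μ hμint hμconv s h.natDegree h le_rfl hdeg
  have hsq : ∫ x, (h.eval x)^2 ∂μ = 0 := by
    have hpt : (fun x : ℝ => (h.eval x)^2)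
        = fun x => (Q (2^s)).eval x * h.eval x - (RR γ s).eval x * h.eval x := by
      funext x
      simp only [hh, eval_sub]
      ring
    rw [hpt, integral_sub ?_ ?_, hI1, hI2, sub_zero]
    · simpa only [eval_mul] using hμint (Q (2^s) * h)
    · simpa only [eval_mul] using hμint (RR γ s * h)
  by_contra hne
  exact (hμpos h (sub_ne_zero_of_ne hne)).ne' hsq

lemma Qnorm (γ : ℕ → ℝ) (hγ : ∀ s : ℕ, 0 < γ (s + 1) ∧ γ (s + 1) < 1 / 4)
    (μ : Measure ℝ) [IsProbabilityMeasure μ]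
    (hμint : ∀ p : Polynomial ℝ, Integrable (fun x => p.eval x) μ)
    (hμpos : ∀ p : Polynomial ℝ, p ≠ 0 → 0 < ∫ x, (p.eval x) ^ 2 ∂μ)
    (hμconv : ∀ p : Polynomial ℝ,
      Tendsto (fun s => nuInt γ s (fun x => p.eval x)) atTop (nhds (∫ x, p.eval x ∂μ)))
    (Q : ℕ → Polynomial ℝ) (hQmonic : ∀ n, (Q n).Monic) (hQdeg : ∀ n, (Q n).natDegree = n)
    (hQorth : ∀ n : ℕ, ∀ p : Polynomial ℝ, p.degree < (n : WithBot ℕ) →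
      ∫ x, (Q n).eval x * p.eval x ∂μ = 0)
    (s : ℕ) : ∫ x, ((Q (2^s)).eval x)^2 ∂μ = tau γ s := by
  rw [Qid γ hγ μ hμint hμpos hμconv Q hQmonic hQdeg hQorth s]
  have hpt : (fun x : ℝ => ((RR γ s).eval x)^2)
      = fun x => (RR γ (s+1)).eval x * (1 : Polynomial ℝ).eval x + tau γ s := by
    funext x
    have hr := congrArg (eval x) (Rrec γ s)
    simp only [eval_sub, eval_pow, eval_C] at hr
    simp only [eval_one, mul_one]
    linarith
  rw [hpt, integral_add ?_ ?_]
  · have h1 : ∫ x, (RR γ (s+1)).eval x * (1 : Polynomial ℝ).eval x ∂μ = 0 := by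
      apply orthAux γ hγ μ hμint hμconv (s+1) 0 1 (by simp)
      rw [degree_one]
      exact_mod_cast (by positivity : (0:ℕ) < 2^(s+1))
    rw [h1, zero_add]
    simp [integral_const]
  · simpa only [eval_mul] using hμint (RR γ (s+1) * 1)
  · exact integrable_const _

def blocks (sf idx : ℕ → ℕ) : ℕ → List (ℕ × ℕ)
  | 0 => []
  | m+1 => (sf (m+1), idx (m+1)) :: blocks sf idx m

end AG

open AG

theorem stmt_11 (γ : ℕ → ℝ) (hγ : ∀ s : ℕ, 0 < γ (s + 1) ∧ γ (s + 1) < 1 / 4)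
    (μ : Measure ℝ) [IsProbabilityMeasure μ]
    (hμint : ∀ p : Polynomial ℝ, Integrable (fun x => p.eval x) μ)
    (hμpos : ∀ p : Polynomial ℝ, p ≠ 0 → 0 < ∫ x, (p.eval x) ^ 2 ∂μ)
    (hμconv : ∀ p : Polynomial ℝ,
      Tendsto (fun s => nuInt γ s (fun x => p.eval x)) atTop (nhds (∫ x, p.eval x ∂μ)))
    (Q : ℕ → Polynomial ℝ) (hQmonic : ∀ n, (Q n).Monic) (hQdeg : ∀ n, (Q n).natDegree = n)
    (hQorth : ∀ n : ℕ, ∀ p : Polynomial ℝ, p.degree < (n : WithBot ℕ) →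
      ∫ x, (Q n).eval x * p.eval x ∂μ = 0)
    (n : ℕ) (hn : 1 ≤ n) (sf idx : ℕ → ℕ)
    (hs1 : 0 < sf 1) (hsmono : ∀ k, 1 ≤ k → k < n → sf k < sf (k + 1))
    (hidx : ∀ k, 1 ≤ k → k ≤ n → idx k = 1 ∨ idx k = 2)
 :
    ∫ x, ∏ j ∈ Finset.Icc 1 n, ((Q (2 ^ sf j)).eval x) ^ idx j ∂μ =
      (∏ k ∈ Finset.Icc 1 n,
          ((idx k : ℝ) - 1) ^ (if k = 1 then sf 1 else sf k - sf (k - 1) - 1)) *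
        ∏ k ∈ Finset.Icc 1 n,
          (∫ x, ((Q (2 ^ sf k)).eval x) ^ 2 ∂μ) ^ (if k = n then 1 else idx (k + 1) - 1) := by
  obtain ⟨n', rfl⟩ : ∃ n', n = n' + 1 := ⟨n - 1, by omega⟩
  -- Below
  have hBelow : ∀ m, m < n' + 1 → Below (sf (m+1)) (blocks sf idx m) := by
    intro m
    induction m with
    | zero => intro _; trivial
    | succ m IH =>
      intro hm
      exact ⟨hsmono (m+1) (by omega) (by omega), hidx (m+1) (by omega) (by omega),
        IH (by omega)⟩
  -- eval of product
  have evalprod : ∀ m, ∀ x : ℝ, (Apoly γ (blocks sf idx m)).eval x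
      = ∏ j ∈ Finset.Icc 1 m, ((RR γ (sf j)).eval x) ^ idx j := by
    intro m
    induction m with
    | zero => intro x; simp [blocks, Apoly]
    | succ m IH =>
      intro x
      rw [show Apoly γ (blocks sf idx (m+1))
          = RR γ (sf (m+1)) ^ idx (m+1) * Apoly γ (blocks sf idx m) from rfl,
        Finset.prod_Icc_succ_top (by omega : 1 ≤ m + 1), ← IH x, eval_mul, eval_pow]
      ring
  -- LHS
  have hLHS : ∫ x, ∏ j ∈ Finset.Icc 1 (n'+1), ((Q (2 ^ sf j)).eval x) ^ idx j ∂μ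
      = tau γ (sf (n'+1)) * Psi γ (blocks sf idx (n'+1)) := by
    have h1 : ∫ x, ∏ j ∈ Finset.Icc 1 (n'+1), ((Q (2 ^ sf j)).eval x) ^ idx j ∂μ
        = ∫ x, (Apoly γ (blocks sf idx (n'+1))).eval x ∂μ := by
      congr 1
      funext x
      rw [evalprod (n'+1) x]
      exact Finset.prod_congr rfl (fun j hj => by
        rw [Qid γ hγ μ hμint hμpos hμconv Q hQmonic hQdeg hQorth (sf j)])
    rw [h1]
    exact integ γ hγ μ hμconv (sf (n'+1)) (idx (n'+1)) (blocks sf idx n')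
      (hidx (n'+1) (by omega) (by omega)) (hBelow n' (by omega))
  rw [hLHS]
  -- Psi product formula
  have PsiProd : ∀ m', m' + 1 ≤ n' + 1 → Psi γ (blocks sf idx (m'+1))
      = (∏ k ∈ Finset.Icc 1 (m'+1),
          ((idx k : ℝ) - 1) ^ (if k = 1 then sf 1 else sf k - sf (k-1) - 1))
        * (∏ k ∈ Finset.Icc 1 m', tau γ (sf k) ^ (idx (k+1) - 1)) := by
    intro m'
    induction m' with
    | zero =>
      intro _
      show ((idx 1 : ℝ) - 1) = _
      rw [show Finset.Icc 1 0 = (∅ : Finset ℕ) from rfl]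
      simp only [Finset.Icc_self, Finset.prod_singleton, Finset.prod_empty, mul_one, if_pos rfl]
      rcases hidx 1 (by omega) (by omega) with h1 | h1 <;> rw [h1]
      · norm_num
        exact (zero_pow (by omega : sf 1 ≠ 0)).symm
      · norm_num
    | succ m' IH =>
      intro hm
      have hmono : sf (m'+1) < sf (m'+2) := hsmono (m'+1) (by omega) (by omega)
      have hPsieq : Psi γ (blocks sf idx (m'+2))
          = (if idx (m'+2) = 1 then (if sf (m'+2) = sf (m'+1) + 1 then (1:ℝ) else 0)
              else tau γ (sf (m'+1))) * Psi γ (blocks sf idx (m'+1)) := rfl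
      have hfac : (if idx (m'+2) = 1 then (if sf (m'+2) = sf (m'+1) + 1 then (1:ℝ) else 0)
              else tau γ (sf (m'+1)))
          = ((idx (m'+2) : ℝ) - 1) ^ (sf (m'+2) - sf (m'+1) - 1)
            * tau γ (sf (m'+1)) ^ (idx (m'+2) - 1) := by
        rcases hidx (m'+2) (by omega) (by omega) with h1 | h1 <;> rw [h1]
        · norm_num
          by_cases hch : sf (m'+2) = sf (m'+1) + 1
          · rw [if_pos hch, hch, show sf (m'+1) + 1 - sf (m'+1) - 1 = 0 from by omega, pow_zero]
          · rw [if_neg hch, zero_pow (by omega : sf (m'+2) - sf (m'+1) - 1 ≠ 0)]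
        · norm_num
      rw [hPsieq, hfac, IH (by omega),
        Finset.prod_Icc_succ_top (by omega : 1 ≤ m' + 2)
          (fun k => ((idx k : ℝ) - 1) ^ (if k = 1 then sf 1 else sf k - sf (k-1) - 1)),
        Finset.prod_Icc_succ_top (by omega : 1 ≤ m' + 1)
          (fun k => tau γ (sf k) ^ (idx (k+1) - 1)),
        if_neg (by omega : ¬ (m' + 2 = 1)),
        show (m' + 2) - 1 = m' + 1 from by omega]
      ring
  -- RHS
  have hRHS : ∏ k ∈ Finset.Icc 1 (n'+1),
        (∫ x, ((Q (2 ^ sf k)).eval x) ^ 2 ∂μ) ^ (if k = n'+1 then 1 else idx (k + 1) - 1)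
      = (∏ k ∈ Finset.Icc 1 n', tau γ (sf k) ^ (idx (k+1) - 1)) * tau γ (sf (n'+1)) := by
    have h2 : ∀ k ∈ Finset.Icc 1 (n'+1),
        (∫ x, ((Q (2 ^ sf k)).eval x) ^ 2 ∂μ) ^ (if k = n'+1 then 1 else idx (k + 1) - 1)
        = tau γ (sf k) ^ (if k = n'+1 then 1 else idx (k + 1) - 1) := by
      intro k _
      rw [Qnorm γ hγ μ hμint hμpos hμconv Q hQmonic hQdeg hQorth (sf k)]
    rw [Finset.prod_congr rfl h2, Finset.prod_Icc_succ_top (by omega : 1 ≤ n' + 1),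
      if_pos rfl, pow_one]
    congr 1
    exact Finset.prod_congr rfl (fun k hk => by
      rw [if_neg (by simp at hk; omega : ¬ (k = n' + 1))])
  rw [hRHS, PsiProd n' (by omega)]
  ring
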